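/- Let H be a complex Hilbert space, let q ∈ B(H), let A : ℝ → B(H) be continuous in operator norm and satisfy A(t)* q = q A(t) for all t ∈ ℝ, and let U : ℝ × ℝ → B(H) satisfy: U(s, s) = 1 for all s, and for each fixed s ∈ ℝ and x ∈ H the map t ↦ U(t, s)x is differentiable with derivative (d/dt) U(t, s)x = i A(t) U(t, s) x. Then U(t, s)* q U(t, s) = q for all t, s ∈ ℝ. -/

import Mathlib

/-- Conservation of a (possibly indefinite) sesquilinear form by the Cauchy evolution:
if `A(t)* q = q A(t)` and `U(t,s)` satisfies `U(s,s) = 1` and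
`∂ₜ U(t,s) = i A(t) U(t,s)` (strongly), then `U(t,s)* q U(t,s) = q` for all `t, s`. -/
theorem evolution_preserves_symplectic_form
    {H : Type*} [NormedAddCommGroup H] [InnerProductSpace ℂ H] [CompleteSpace H]
    (q : H →L[ℂ] H)
    (A : ℝ → H →L[ℂ] H) (hA : Continuous A)
    (hAq : ∀ t : ℝ, ContinuousLinearMap.adjoint (A t) ∘L q = q ∘L A t)
    (U : ℝ → ℝ → H →L[ℂ] H)
    (hUid : ∀ s : ℝ, U s s = 1)
    (hUderiv : ∀ (s : ℝ) (x : H) (t : ℝ),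
      HasDerivAt (fun t' : ℝ => U t' s x) (Complex.I • A t (U t s x)) t) :
    ∀ t s : ℝ, (ContinuousLinearMap.adjoint (U t s) ∘L q) ∘L U t s = q := by
  intro t s
  ext y
  apply ext_inner_left ℂ
  intro x
  -- consider φ τ = ⟪U τ s x, q (U τ s y)⟫
  have key : ∀ τ : ℝ,
      HasDerivAt (fun τ' : ℝ => (inner ℂ (U τ' s x) (q (U τ' s y)) : ℂ)) 0 τ := by
    intro τ
    have hf := hUderiv s x τ
    have hg : HasDerivAt (fun τ' : ℝ => q (U τ' s y))
        (q (Complex.I • A τ (U τ s y))) τ := by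
      simpa [Function.comp_def] using
        ((q.restrictScalars ℝ).hasFDerivAt (x := U τ s y)).comp_hasDerivAt τ (hUderiv s y τ)
    have h := hf.inner ℂ hg
    have hz : (inner ℂ (U τ s x) (q (Complex.I • A τ (U τ s y))) : ℂ)
        + inner ℂ (Complex.I • A τ (U τ s x)) (q (U τ s y)) = 0 := by
      have hadj : (inner ℂ (A τ (U τ s x)) (q (U τ s y)) : ℂ)
          = inner ℂ (U τ s x) (q (A τ (U τ s y))) := by
        have := ContinuousLinearMap.adjoint_inner_left (A τ)
          (q (U τ s y)) (U τ s x)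
        calc (inner ℂ (A τ (U τ s x)) (q (U τ s y)) : ℂ)
            = inner ℂ (U τ s x) ((ContinuousLinearMap.adjoint (A τ)) (q (U τ s y))) := by
              rw [ContinuousLinearMap.adjoint_inner_right]
          _ = inner ℂ (U τ s x) (q (A τ (U τ s y))) := by
              have := congrArg (fun T : H →L[ℂ] H => T (U τ s y)) (hAq τ)
              simpa using congrArg (fun z => (inner ℂ (U τ s x) z : ℂ)) this
      simp only [map_smul, inner_smul_left, inner_smul_right, Complex.conj_I, hadj]
      ring
    rw [hz] at h
    exact h
  have hconst : (fun τ : ℝ => (inner ℂ (U τ s x) (q (U τ s y)) : ℂ)) t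
      = (fun τ : ℝ => (inner ℂ (U τ s x) (q (U τ s y)) : ℂ)) s := by
    have : ∀ τ : ℝ, (fun τ' : ℝ => (inner ℂ (U τ' s x) (q (U τ' s y)) : ℂ)) τ
        = (inner ℂ (U s s x) (q (U s s y)) : ℂ) := by
      intro τ
      exact is_const_of_deriv_eq_zero (fun τ => (key τ).differentiableAt)
        (fun τ => (key τ).deriv) τ s
    rw [this t, this s]
  simpa [hUid s, ContinuousLinearMap.adjoint_inner_right] using hconst
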